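/- For every n ∈ ℕ, ∑_{k=0}^n (C(n,k))^{-1} ≤ 3. -/

import Mathlib

lemma aux_le_choose : ∀ n j : ℕ, 1 ≤ j → j < n → n ≤ n.choose j := by
  intro n
  induction n with
  | zero => intro j h1 h2; omega
  | succ m ih =>
    intro j h1 h2
    rcases eq_or_lt_of_le (Nat.lt_succ_iff.mp h2) with rfl | hjm
    · simp [Nat.choose_succ_self_right]
    · obtain ⟨i, rfl⟩ := Nat.exists_eq_add_of_le h1
      rw [Nat.add_comm 1 i, Nat.choose_succ_succ']
      have h3 : m.choose i ≥ 1 := Nat.choose_pos (by omega)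
      have h4 : m ≤ m.choose (i + 1) := ih (i + 1) (by omega) (by omega)
      omega

theorem stmt_3 (n : ℕ) :
    ∑ k ∈ Finset.range (n + 1), ((n.choose k : ℝ))⁻¹ ≤ 3 := by
  match n with
  | 0 => norm_num
  | 1 => simp [Finset.sum_range_succ]; norm_num
  | (m + 2) =>
    set n := m + 2 with hn
    have hpos : (0:ℝ) < n := by positivity
    rw [Finset.sum_range_succ, Finset.sum_range_succ']
    have hmid : ∑ k ∈ Finset.range (m + 1), ((n.choose (k + 1) : ℝ))⁻¹
        ≤ ∑ _k ∈ Finset.range (m + 1), (n : ℝ)⁻¹ := by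
      apply Finset.sum_le_sum
      intro k hk
      rw [Finset.mem_range] at hk
      have h := aux_le_choose n (k + 1) (by omega) (by omega)
      have hc : (0:ℝ) < (n.choose (k+1) : ℝ) :=
        Nat.cast_pos.mpr (Nat.choose_pos (by omega))
      exact inv_anti₀ hpos (by exact_mod_cast h)
    have : ∑ _k ∈ Finset.range (m + 1), (n : ℝ)⁻¹ = (m + 1) * (n : ℝ)⁻¹ := by
      simp
    rw [this] at hmid
    have hlt : (m + 1 : ℝ) * (n : ℝ)⁻¹ ≤ 1 := by
      rw [mul_inv_le_iff₀ hpos, one_mul]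
      push_cast [hn]; linarith
    simp only [Nat.choose_zero_right, Nat.choose_self, Nat.cast_one, inv_one]
    linarith
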